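/- Let p be a prime, m ≥ 1, and let F be a finite field with |F| = p^m. A function f : F^n → F is affine with respect to the additive group of F if and only if there exist a_0 ∈ F and coefficients a_{ij} ∈ F (1 ≤ i ≤ n, 0 ≤ j ≤ m−1) such that f(x_1,…,x_n) = a_0 + Σ_{i=1}^{n} Σ_{j=0}^{m−1} a_{ij} · x_i^{p^j} for all (x_1,…,x_n) ∈ F^n. -/

import Mathlib

open Polynomial

/-- Every additive map on a finite field of cardinality `p ^ m` is a linearized
polynomial `t ↦ ∑ j, a j * t ^ p ^ j`. -/
theorem aux_additive_hom_eq_linearized {K : Type*} [Field K] [Fintype K]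
    (p m : ℕ) (hp : p.Prime) (hm : 1 ≤ m) (hcard : Fintype.card K = p ^ m)
    [CharP K p] (h : K →+ K) :
    ∃ a : Fin m → K, ∀ t : K, h t = ∑ j : Fin m, a j * t ^ p ^ (j : ℕ) := by
  haveI : Fact p.Prime := ⟨hp⟩
  letI : Algebra (ZMod p) K := ZMod.algebra K p
  have hfr : Module.finrank (ZMod p) K = m := by
    have hc := Module.card_eq_pow_finrank (K := ZMod p) (V := K)
    rw [ZMod.card, hcard] at hc
    exact (Nat.pow_right_injective hp.two_le hc.symm)
  -- the candidate linearized maps, as linear maps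
  have hadd : ∀ (a : Fin m → K) (x y : K),
      (∑ j : Fin m, a j * (x + y) ^ p ^ (j : ℕ)) =
        (∑ j : Fin m, a j * x ^ p ^ (j : ℕ)) + ∑ j : Fin m, a j * y ^ p ^ (j : ℕ) := by
    intro a x y
    rw [← Finset.sum_add_distrib]
    refine Finset.sum_congr rfl fun j _ => ?_
    rw [add_pow_char_pow, mul_add]
  let Φ : (Fin m → K) → (K →ₗ[ZMod p] K) := fun a =>
    AddMonoidHom.toZModLinearMap p
      (AddMonoidHom.mk' (fun t => ∑ j : Fin m, a j * t ^ p ^ (j : ℕ)) (hadd a))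
  have hΦ : ∀ a t, Φ a t = ∑ j : Fin m, a j * t ^ p ^ (j : ℕ) := fun a t => rfl
  -- injectivity of Φ
  have hΦinj : Function.Injective Φ := by
    intro a b hab
    have key : ∀ t : K, ∑ j : Fin m, (a j - b j) * t ^ p ^ (j : ℕ) = 0 := by
      intro t
      have := congrArg (fun g : K →ₗ[ZMod p] K => g t) hab
      simp only [hΦ] at this
      simp [sub_mul, Finset.sum_sub_distrib, this]
    set P : K[X] := ∑ j : Fin m, C (a j - b j) * X ^ p ^ (j : ℕ) with hP
    have hPeval : ∀ t : K, P.eval t = 0 := by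
      intro t
      simpa [hP, eval_finset_sum] using key t
    have hPdeg : P.natDegree < Fintype.card K := by
      rw [hcard]
      calc P.natDegree ≤ p ^ (m - 1) := by
            refine Polynomial.natDegree_sum_le_of_forall_le _ _ fun j _ => ?_
            calc (C (a j - b j) * X ^ p ^ (j : ℕ)).natDegree
                ≤ (X ^ p ^ (j : ℕ) : K[X]).natDegree := natDegree_C_mul_le _ _
              _ = p ^ (j : ℕ) := natDegree_X_pow _
              _ ≤ p ^ (m - 1) :=
                  Nat.pow_le_pow_right hp.pos (Nat.le_sub_one_of_lt j.isLt)
        _ < p ^ m := Nat.pow_lt_pow_right hp.one_lt (by omega)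
    have hP0 : P = 0 :=
      Polynomial.eq_zero_of_natDegree_lt_card_of_eval_eq_zero P Function.injective_id
        hPeval hPdeg
    funext j
    have hcoeff : P.coeff (p ^ (j : ℕ)) = a j - b j := by
      rw [hP, Polynomial.finset_sum_coeff]
      rw [Finset.sum_eq_single j]
      · simp [sub_mul, coeff_X_pow]
      · intro k _ hk
        have hne : p ^ (k : ℕ) ≠ p ^ (j : ℕ) := fun hpk =>
          hk (Fin.ext (Nat.pow_right_injective hp.two_le hpk))
        simp [sub_mul, coeff_X_pow, Ne.symm hne]
      · simp
    rw [hP0] at hcoeff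
    simp only [coeff_zero] at hcoeff
    have := hcoeff.symm
    rwa [sub_eq_zero] at this
  -- cardinality: linear maps K →ₗ K are in bijection with Fin m → K
  let b : Module.Basis (Fin m) (ZMod p) K := Module.finBasisOfFinrankEq (ZMod p) K hfr
  let E : (Fin m → K) ≃ (K →ₗ[ZMod p] K) := (b.constr (M' := K) ℕ).toEquiv
  haveI : Fintype (K →ₗ[ZMod p] K) := Fintype.ofEquiv _ E
  have hΦbij : Function.Bijective Φ :=
    (Fintype.bijective_iff_injective_and_card Φ).2 ⟨hΦinj, Fintype.card_congr E⟩
  obtain ⟨a, ha⟩ := hΦbij.2 (h.toZModLinearMap p)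
  exact ⟨a, fun t => by
    have := congrArg (fun g : K →ₗ[ZMod p] K => g t) ha
    simpa [hΦ] using this.symm⟩

/-- A function on a finite field with `p^m` elements is affine with respect to the additive
group iff it is of the form `a₀ + Σᵢ Σⱼ aᵢⱼ · xᵢ^(p^j)` (`1 ≤ i ≤ n`, `0 ≤ j ≤ m-1`). -/
theorem affine_iff_additive_polynomial {K : Type*} [Field K] [Fintype K]
    (p m : ℕ) (hp : p.Prime) (hm : 1 ≤ m) (hcard : Fintype.card K = p ^ m)
    (n : ℕ) (f : (Fin n → K) → K) :
    (∀ x y : Fin n → K, f x + f y = f (x + y) + f 0) ↔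
      ∃ (a0 : K) (a : Fin n → Fin m → K),
        ∀ x : Fin n → K,
          f x = a0 + ∑ i : Fin n, ∑ j : Fin m, a i j * x i ^ p ^ (j : ℕ) := by
  haveI : Fact p.Prime := ⟨hp⟩
  haveI : CharP K p := by
    rw [CharP.charP_iff_prime_eq_zero hp]
    have h1 : ((Fintype.card K : ℕ) : K) = 0 := FiniteField.cast_card_eq_zero K
    rw [hcard] at h1
    push_cast at h1
    exact pow_eq_zero_iff (by omega) |>.mp h1
  constructor
  · intro hf
    have hG : ∀ x y : Fin n → K,
        (f (x + y) - f 0) = (f x - f 0) + (f y - f 0) := by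
      intro x y
      linear_combination -(hf x y)
    let G : (Fin n → K) →+ K := AddMonoidHom.mk' (fun x => f x - f 0) hG
    have hcoef : ∀ i : Fin n, ∃ a : Fin m → K,
        ∀ t : K, G (Pi.single i t) = ∑ j : Fin m, a j * t ^ p ^ (j : ℕ) := by
      intro i
      exact aux_additive_hom_eq_linearized p m hp hm hcard
        (G.comp (AddMonoidHom.single (fun _ : Fin n => K) i))
    choose a ha using hcoef
    refine ⟨f 0, a, fun x => ?_⟩
    have hx : x = ∑ i : Fin n, Pi.single i (x i) := (Finset.univ_sum_single x).symm
    have : G x = ∑ i : Fin n, G (Pi.single i (x i)) := by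
      conv_lhs => rw [hx]
      exact map_sum G _ _
    have hGx : f x - f 0 = ∑ i : Fin n, ∑ j : Fin m, a i j * x i ^ p ^ (j : ℕ) := by
      rw [show f x - f 0 = G x from rfl, this]
      exact Finset.sum_congr rfl fun i _ => ha i (x i)
    linear_combination hGx
  · rintro ⟨a0, a, ha⟩ x y
    have hppos : ∀ j : Fin m, p ^ (j : ℕ) ≠ 0 := fun j => pow_ne_zero _ hp.pos.ne'
    simp only [ha, Pi.add_apply, Pi.zero_apply]
    have hadd : ∀ (i : Fin n) (j : Fin m),
        a i j * (x i + y i) ^ p ^ (j : ℕ) =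
          a i j * x i ^ p ^ (j : ℕ) + a i j * y i ^ p ^ (j : ℕ) := by
      intro i j
      rw [add_pow_char_pow, mul_add]
    have hzero : ∀ (i : Fin n) (j : Fin m), a i j * (0 : K) ^ p ^ (j : ℕ) = 0 := by
      intro i j
      rw [zero_pow (hppos j), mul_zero]
    simp only [hadd, hzero, Finset.sum_add_distrib, Finset.sum_const_zero]
    ring
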